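/- arXiv:2504.07820 — 3 statements merged into one kernel-verified Lean document; each statement's English description precedes it below -/
import Mathlib

section
/- For the centered cardinal cubic B-spline M₄, the convolution abs * M₄ equals (1/20)|x|⁵ − (1/6)x⁴ + (2/3)x² + 7/15 for |x| ≤ 1, equals (1/60)(2−|x|)⁵ + |x| for 1 ≤ |x| ≤ 2, and equals |x| for |x| ≥ 2. -/
open MeasureTheory

/-- The centered cardinal cubic B-spline of order 4. -/
noncomputable def M4 (x : ℝ) : ℝ :=
  if |x| ≤ 1 then (1 / 6) * (3 * |x| ^ 3 - 6 * x ^ 2 + 4)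
  else if |x| ≤ 2 then (1 / 6) * (2 - |x|) ^ 3
  else 0

lemma M4_eq1 {y : ℝ} (h : |y| ≤ 1) :
    M4 y = (1 / 6) * (3 * |y| ^ 3 - 6 * y ^ 2 + 4) := by
  simp [M4, h]

lemma M4_eq2 {y : ℝ} (h1 : 1 ≤ |y|) (h2 : |y| ≤ 2) :
    M4 y = (1 / 6) * (2 - |y|) ^ 3 := by
  unfold M4
  by_cases h : |y| ≤ 1
  · have hy : |y| = 1 := le_antisymm h h1
    have hy2 : y ^ 2 = 1 := by rw [← sq_abs, hy]; norm_num
    rw [if_pos h, hy, hy2]; norm_num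
  · rw [if_neg h, if_pos h2]

lemma M4_eq3 {y : ℝ} (h : 2 ≤ |y|) : M4 y = 0 := by
  unfold M4
  have h1 : ¬ |y| ≤ 1 := by intro hc; linarith
  by_cases h2 : |y| ≤ 2
  · have hy : |y| = 2 := le_antisymm h2 h
    rw [if_neg h1, if_pos h2, hy]; norm_num
  · rw [if_neg h1, if_neg h2]

lemma M4_cont : Continuous M4 := by
  unfold M4
  apply Continuous.if_le
  · fun_prop
  · apply Continuous.if_le
    · fun_prop
    · exact continuous_const
    · exact continuous_abs
    · exact continuous_const
    · intro x hx; rw [hx]; norm_num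
  · exact continuous_abs
  · exact continuous_const
  · intro x hx
    have hx2 : x ^ 2 = 1 := by rw [← sq_abs, hx]; norm_num
    rw [if_pos (by rw [hx]; norm_num), hx, hx2]; norm_num

lemma M4_neg (y : ℝ) : M4 (-y) = M4 y := by
  simp only [M4, abs_neg, neg_sq]

lemma linC (u p q r s a b : ℝ) :
    ∫ y in a..b, (u - y) * (p + q * y + r * y ^ 2 + s * y ^ 3) =
      u * p * (b - a) + (u * q - p) / 2 * (b ^ 2 - a ^ 2)
        + (u * r - q) / 3 * (b ^ 3 - a ^ 3) + (u * s - r) / 4 * (b ^ 4 - a ^ 4)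
        - s / 5 * (b ^ 5 - a ^ 5) := by
  have key : ∀ y : ℝ, HasDerivAt
      (fun t => u * p * t + (u * q - p) / 2 * t ^ 2 + (u * r - q) / 3 * t ^ 3
        + (u * s - r) / 4 * t ^ 4 - s / 5 * t ^ 5)
      ((u - y) * (p + q * y + r * y ^ 2 + s * y ^ 3)) y := by
    intro y
    have h1 := hasDerivAt_id y
    have h2 := hasDerivAt_pow 2 y
    have h3 := hasDerivAt_pow 3 y
    have h4 := hasDerivAt_pow 4 y
    have h5 := hasDerivAt_pow 5 y
    refine HasDerivAt.congr_deriv (((((h1.const_mul (u * p)).add (h2.const_mul ((u * q - p) / 2))).add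
      (h3.const_mul ((u * r - q) / 3))).add (h4.const_mul ((u * s - r) / 4))).sub
      (h5.const_mul (s / 5))) ?_
    push_cast; ring
  rw [intervalIntegral.integral_eq_sub_of_hasDerivAt (fun y _ => key y)
    ((Continuous.intervalIntegrable (by fun_prop) _ _))]
  ring

lemma piece (x a b p q r s : ℝ) (hab : a ≤ b)
    (h : ∀ y ∈ Set.Icc a b, |x - y| * M4 y = (x - y) * (p + q * y + r * y ^ 2 + s * y ^ 3)) :
    (∫ y in a..b, |x - y| * M4 y) =
      x * p * (b - a) + (x * q - p) / 2 * (b ^ 2 - a ^ 2)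
        + (x * r - q) / 3 * (b ^ 3 - a ^ 3) + (x * s - r) / 4 * (b ^ 4 - a ^ 4)
        - s / 5 * (b ^ 5 - a ^ 5) := by
  rw [intervalIntegral.integral_congr
    (g := fun y => (x - y) * (p + q * y + r * y ^ 2 + s * y ^ 3))
    (by rw [Set.uIcc_of_le hab]; exact h), linC]

lemma full_to_interval (x : ℝ) :
    (∫ y, |x - y| * M4 y) = ∫ y in (-2 : ℝ)..2, |x - y| * M4 y := by
  rw [intervalIntegral.integral_of_le (by norm_num)]
  refine (setIntegral_eq_integral_of_forall_compl_eq_zero fun y hy => ?_).symm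
  have : 2 ≤ |y| := by
    simp only [Set.mem_Ioc, not_and_or, not_lt, not_le] at hy
    rcases hy with h | h
    · rw [abs_of_nonpos (by linarith)]; linarith
    · rw [abs_of_nonneg (by linarith)]; linarith
  rw [M4_eq3 this, mul_zero]

lemma key_nonneg (x : ℝ) (hx : 0 ≤ x) :
    (x ≤ 1 → (∫ y, |x - y| * M4 y)
        = (1 / 20) * x ^ 5 - (1 / 6) * x ^ 4 + (2 / 3) * x ^ 2 + 7 / 15) ∧
    (1 ≤ x → x ≤ 2 → (∫ y, |x - y| * M4 y) = (1 / 60) * (2 - x) ^ 5 + x) ∧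
    (2 ≤ x → (∫ y, |x - y| * M4 y) = x) := by
  have hcont : Continuous (fun y => |x - y| * M4 y) := by
    exact ((continuous_const.sub continuous_id).abs).mul M4_cont
  have hi : ∀ a b : ℝ, IntervalIntegrable (fun y => |x - y| * M4 y) volume a b :=
    fun a b => hcont.intervalIntegrable a b
  have hB1 : ∀ y ∈ Set.Icc (-2 : ℝ) (-1),
      |x - y| * M4 y = (x - y) * (4/3 + 2 * y + 1 * y ^ 2 + (1/6) * y ^ 3) := by
    intro y hy
    obtain ⟨hy1, hy2⟩ := hy
    have ha : |y| = -y := abs_of_nonpos (by linarith)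
    rw [M4_eq2 (by rw [ha]; linarith) (by rw [ha]; linarith), ha,
      abs_of_nonneg (by linarith : (0:ℝ) ≤ x - y)]
    ring
  have hB2 : ∀ y ∈ Set.Icc (-1 : ℝ) 0,
      |x - y| * M4 y = (x - y) * (2/3 + 0 * y + (-1) * y ^ 2 + (-1/2) * y ^ 3) := by
    intro y hy
    obtain ⟨hy1, hy2⟩ := hy
    have ha : |y| = -y := abs_of_nonpos hy2
    rw [M4_eq1 (by rw [ha]; linarith), ha,
      abs_of_nonneg (by linarith : (0:ℝ) ≤ x - y)]
    ring
  have hB3p : ∀ a b : ℝ, 0 ≤ a → b ≤ 1 → (∀ y ∈ Set.Icc a b, y ≤ x) →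
      ∀ y ∈ Set.Icc a b,
      |x - y| * M4 y = (x - y) * (2/3 + 0 * y + (-1) * y ^ 2 + (1/2) * y ^ 3) := by
    intro a b ha hb hle y hy
    obtain ⟨hy1, hy2⟩ := hy
    have hay : |y| = y := abs_of_nonneg (by linarith)
    rw [M4_eq1 (by rw [hay]; linarith), hay,
      abs_of_nonneg (by linarith [hle y ⟨hy1, hy2⟩] : (0:ℝ) ≤ x - y)]
    ring
  have hB3m : ∀ a b : ℝ, 0 ≤ a → b ≤ 1 → (∀ y ∈ Set.Icc a b, x ≤ y) →
      ∀ y ∈ Set.Icc a b,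
      |x - y| * M4 y = (x - y) * (-(2/3) + 0 * y + 1 * y ^ 2 + (-1/2) * y ^ 3) := by
    intro a b ha hb hle y hy
    obtain ⟨hy1, hy2⟩ := hy
    have hay : |y| = y := abs_of_nonneg (by linarith)
    rw [M4_eq1 (by rw [hay]; linarith), hay,
      abs_of_nonpos (by linarith [hle y ⟨hy1, hy2⟩] : x - y ≤ 0)]
    ring
  have hB4p : ∀ a b : ℝ, 1 ≤ a → b ≤ 2 → (∀ y ∈ Set.Icc a b, y ≤ x) →
      ∀ y ∈ Set.Icc a b,
      |x - y| * M4 y = (x - y) * (4/3 + (-2) * y + 1 * y ^ 2 + (-1/6) * y ^ 3) := by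
    intro a b ha hb hle y hy
    obtain ⟨hy1, hy2⟩ := hy
    have hay : |y| = y := abs_of_nonneg (by linarith)
    rw [M4_eq2 (by rw [hay]; linarith) (by rw [hay]; linarith), hay,
      abs_of_nonneg (by linarith [hle y ⟨hy1, hy2⟩] : (0:ℝ) ≤ x - y)]
    ring
  have hB4m : ∀ a b : ℝ, 1 ≤ a → b ≤ 2 → (∀ y ∈ Set.Icc a b, x ≤ y) →
      ∀ y ∈ Set.Icc a b,
      |x - y| * M4 y = (x - y) * (-(4/3) + 2 * y + (-1) * y ^ 2 + (1/6) * y ^ 3) := by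
    intro a b ha hb hle y hy
    obtain ⟨hy1, hy2⟩ := hy
    have hay : |y| = y := abs_of_nonneg (by linarith)
    rw [M4_eq2 (by rw [hay]; linarith) (by rw [hay]; linarith), hay,
      abs_of_nonpos (by linarith [hle y ⟨hy1, hy2⟩] : x - y ≤ 0)]
    ring
  refine ⟨fun hx1 => ?_, fun hx1 hx2 => ?_, fun hx2 => ?_⟩
  · -- 0 ≤ x ≤ 1
    rw [full_to_interval,
      ← intervalIntegral.integral_add_adjacent_intervals (hi (-2) (-1)) (hi (-1) 2),
      ← intervalIntegral.integral_add_adjacent_intervals (hi (-1) 0) (hi 0 2),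
      ← intervalIntegral.integral_add_adjacent_intervals (hi 0 x) (hi x 2),
      ← intervalIntegral.integral_add_adjacent_intervals (hi x 1) (hi 1 2),
      piece x (-2) (-1) (4/3) 2 1 (1/6) (by norm_num) hB1,
      piece x (-1) 0 (2/3) 0 (-1) (-1/2) (by norm_num) hB2,
      piece x 0 x (2/3) 0 (-1) (1/2) hx
        (hB3p 0 x le_rfl hx1 (fun y hy => hy.2)),
      piece x x 1 (-(2/3)) 0 1 (-1/2) hx1
        (hB3m x 1 hx le_rfl (fun y hy => hy.1)),
      piece x 1 2 (-(4/3)) 2 (-1) (1/6) (by norm_num)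
        (hB4m 1 2 le_rfl le_rfl (fun y hy => by linarith [hy.1]))]
    ring
  · -- 1 ≤ x ≤ 2
    rw [full_to_interval,
      ← intervalIntegral.integral_add_adjacent_intervals (hi (-2) (-1)) (hi (-1) 2),
      ← intervalIntegral.integral_add_adjacent_intervals (hi (-1) 0) (hi 0 2),
      ← intervalIntegral.integral_add_adjacent_intervals (hi 0 1) (hi 1 2),
      ← intervalIntegral.integral_add_adjacent_intervals (hi 1 x) (hi x 2),
      piece x (-2) (-1) (4/3) 2 1 (1/6) (by norm_num) hB1,
      piece x (-1) 0 (2/3) 0 (-1) (-1/2) (by norm_num) hB2,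
      piece x 0 1 (2/3) 0 (-1) (1/2) (by norm_num)
        (hB3p 0 1 le_rfl le_rfl (fun y hy => by linarith [hy.2])),
      piece x 1 x (4/3) (-2) 1 (-1/6) hx1
        (hB4p 1 x le_rfl hx2 (fun y hy => hy.2)),
      piece x x 2 (-(4/3)) 2 (-1) (1/6) hx2
        (hB4m x 2 hx1 le_rfl (fun y hy => hy.1))]
    ring
  · -- 2 ≤ x
    rw [full_to_interval,
      ← intervalIntegral.integral_add_adjacent_intervals (hi (-2) (-1)) (hi (-1) 2),
      ← intervalIntegral.integral_add_adjacent_intervals (hi (-1) 0) (hi 0 2),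
      ← intervalIntegral.integral_add_adjacent_intervals (hi 0 1) (hi 1 2),
      piece x (-2) (-1) (4/3) 2 1 (1/6) (by norm_num) hB1,
      piece x (-1) 0 (2/3) 0 (-1) (-1/2) (by norm_num) hB2,
      piece x 0 1 (2/3) 0 (-1) (1/2) (by norm_num)
        (hB3p 0 1 le_rfl le_rfl (fun y hy => by linarith [hy.2])),
      piece x 1 2 (4/3) (-2) 1 (-1/6) (by norm_num)
        (hB4p 1 2 le_rfl le_rfl (fun y hy => by linarith [hy.2]))]
    ring

lemma I_neg (x : ℝ) : (∫ y, |(-x) - y| * M4 y) = ∫ y, |x - y| * M4 y := by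
  have h : (fun y : ℝ => |(-x) - y| * M4 y) = fun y => |x - (-y)| * M4 (-y) := by
    funext y
    rw [M4_neg]
    congr 1
    rw [show x - (-y) = -((-x) - y) by ring, abs_neg]
  rw [h]
  exact integral_neg_eq_self (fun y => |x - y| * M4 y) volume

theorem stmt_6 (x : ℝ) :
    (|x| ≤ 1 → (∫ y, |x - y| * M4 y)
        = (1 / 20) * |x| ^ 5 - (1 / 6) * x ^ 4 + (2 / 3) * x ^ 2 + 7 / 15) ∧
    (1 ≤ |x| → |x| ≤ 2 → (∫ y, |x - y| * M4 y)
        = (1 / 60) * (2 - |x|) ^ 5 + |x|) ∧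
    (2 ≤ |x| → (∫ y, |x - y| * M4 y) = |x|) := by
  rcases le_total 0 x with hx | hx
  · rw [abs_of_nonneg hx]
    have hx4 : x ^ 4 = x ^ 4 := rfl
    exact key_nonneg x hx
  · rw [abs_of_nonpos hx]
    have h := key_nonneg (-x) (by linarith)
    rw [I_neg x] at h
    have hx4 : (-x) ^ 4 = x ^ 4 := by ring
    have hx2 : (-x) ^ 2 = x ^ 2 := by ring
    rw [hx4, hx2] at h
    exact h
end

section
/- Consider the update x^{(k+1)} = x^{(k)} + τ (x^{(k)} − y)·F'(‖x^{(k)} − y‖)/‖x^{(k)} − y‖ with F = −(1/2)·abs, i.e., F'(s) = −1/2 for s > 0. If 0 < ‖y − x^{(0)}‖ < τ/2, then x^{(k)} = x^{(0)} for all even k and x^{(k)} = x^{(1)} for all odd k; in particular the sequence does not converge to y. -/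
open Filter

theorem stmt_18 (d : ℕ) (τ : ℝ) (hτ : 0 < τ)
    (y : EuclideanSpace ℝ (Fin d)) (x : ℕ → EuclideanSpace ℝ (Fin d))
    (h0 : 0 < ‖y - x 0‖) (h0' : ‖y - x 0‖ < τ / 2)
    (hit : ∀ k : ℕ, x (k + 1)
      = x k + (τ * (-(1:ℝ) / 2) / ‖x k - y‖) • (x k - y)) :
    (∀ k : ℕ, Even k → x k = x 0) ∧
    (∀ k : ℕ, Odd k → x k = x 1) ∧
    ¬ Tendsto x atTop (nhds y) := by
  rw [norm_sub_rev] at h0 h0'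
  set r : ℝ := ‖x 0 - y‖ with hrdef
  have hr : 0 < r := h0
  have hτr : r < τ / 2 := h0'
  have hden : τ / 2 - r > 0 := by linarith
  have hne1 : r ≠ 0 := ne_of_gt hr
  have hne2 : τ/2 - r ≠ 0 := ne_of_gt hden
  have hc : τ * (-(1:ℝ)/2) / r = (2*r - τ)/(2*r) - 1 := by
    field_simp
    ring
  have h1 : x 1 - y = ((2*r - τ)/(2*r)) • (x 0 - y) := by
    rw [hit 0, ← hrdef, hc]
    module
  have hn1 : ‖x 1 - y‖ = τ/2 - r := by
    rw [h1, norm_smul, Real.norm_eq_abs,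
      abs_of_neg (by apply div_neg_of_neg_of_pos <;> linarith)]
    field_simp
    ring
  have hs : (τ * (-(1:ℝ)/2) / (τ/2 - r)) * ((2*r - τ)/(2*r))
      = -(τ * (-(1:ℝ)/2) / r) := by
    rw [div_mul_div_comm, ← neg_div,
      div_eq_div_iff (mul_ne_zero hne2 (by positivity)) hne1]
    ring
  have h2 : x 2 = x 0 := by
    have e := hit 1
    rw [hn1, h1, hit 0, ← hrdef, smul_smul, hs] at e
    rw [e]
    module
  have key : ∀ k, x (k + 2) = x k := by
    intro k
    induction k with
    | zero => exact h2
    | succ n ih =>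
      have : n + 1 + 2 = (n + 2) + 1 := by ring
      rw [this, hit (n + 2), ih, ← hit n]
  have heven : ∀ m, x (2 * m) = x 0 := by
    intro m
    induction m with
    | zero => rfl
    | succ n ih =>
      have : 2 * (n + 1) = 2 * n + 2 := by ring
      rw [this, key, ih]
  have hodd : ∀ m, x (2 * m + 1) = x 1 := by
    intro m
    induction m with
    | zero => rfl
    | succ n ih =>
      have : 2 * (n + 1) + 1 = (2 * n + 1) + 2 := by ring
      rw [this, key, ih]
  refine ⟨?_, ?_, ?_⟩
  · intro k ⟨m, hm⟩
    have : k = 2 * m := by omega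
    rw [this, heven]
  · intro k ⟨m, hm⟩
    have : k = 2 * m + 1 := by omega
    rw [this, hodd]
  · intro h
    have h2m : Tendsto (fun m : ℕ => x (2 * m)) atTop (nhds y) :=
      h.comp (tendsto_atTop_mono (fun n => by simp only [id]; omega) tendsto_id)
    simp only [heven] at h2m
    have : x 0 = y := tendsto_nhds_unique tendsto_const_nhds h2m
    rw [hrdef, this, sub_self, norm_zero] at hr
    exact lt_irrefl 0 hr
end

section
/- Let F : ℝ → ℝ be even, twice continuously differentiable with F''(0) < 0, and let F̃(s) = F'(s)/s (extended by F''(0) at s = 0) be continuous and bounded. Then for all sufficiently small τ > 0 and initial point with ‖x^{(0)} − y‖ < τ, the iteration x^{(k+1)} = y + (x^{(k)} − y)(1 + τ F̃(‖x^{(k)} − y‖)) satisfies ‖x^{(k)} − y‖ ≤ ‖x^{(0)} − y‖ (1 + (τ/2) F''(0))^k, so x^{(k)} converges exponentially to y. -/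
open Filter

theorem stmt_19 (d : ℕ) (F : ℝ → ℝ) (heven : ∀ s, F (-s) = F s)
    (hC2 : ContDiff ℝ 2 F) (hF'' : deriv (deriv F) 0 < 0)
    (Ft : ℝ → ℝ) (hFt : ∀ s : ℝ, s ≠ 0 → Ft s = deriv F s / s)
    (hFt0 : Ft 0 = deriv (deriv F) 0)
    (hFtcont : Continuous Ft) (hFtbdd : ∃ C : ℝ, ∀ s : ℝ, |Ft s| ≤ C) :
    ∃ τ₀ : ℝ, 0 < τ₀ ∧ ∀ τ : ℝ, 0 < τ → τ < τ₀ →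
      ∀ (y : EuclideanSpace ℝ (Fin d)) (x : ℕ → EuclideanSpace ℝ (Fin d)),
        ‖x 0 - y‖ < τ →
        (∀ k : ℕ, x (k + 1) = y + (1 + τ * Ft ‖x k - y‖) • (x k - y)) →
        (∀ k : ℕ, ‖x k - y‖ ≤ ‖x 0 - y‖ * (1 + τ / 2 * deriv (deriv F) 0) ^ k) ∧
        Tendsto x atTop (nhds y) := by
  obtain ⟨C, hC⟩ := hFtbdd
  set A := deriv (deriv F) 0 with hA
  have hA0 : A < 0 := hF''
  have hCA : |A| ≤ C := by rw [← hFt0]; exact hC 0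
  set C' : ℝ := max C 1 with hC'def
  have hC'pos : 0 < C' := lt_of_lt_of_le one_pos (le_max_right _ _)
  have hC'A : |A| ≤ C' := hCA.trans (le_max_left _ _)
  have hC'C : C ≤ C' := le_max_left _ _
  have hev : ∀ᶠ s in nhds (0:ℝ), Ft s < A / 2 := by
    have h0 : Ft 0 < A / 2 := by rw [hFt0]; linarith
    exact hFtcont.continuousAt (Iio_mem_nhds h0)
  obtain ⟨δ, hδpos, hδ⟩ := Metric.eventually_nhds_iff.mp hev
  refine ⟨min δ (1 / C'), lt_min hδpos (by positivity), ?_⟩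
  intro τ hτ0 hττ₀ y x hx0 hrec
  have hτδ : τ < δ := hττ₀.trans_le (min_le_left _ _)
  have hτC : τ * C' < 1 := by
    have : τ < 1 / C' := hττ₀.trans_le (min_le_right _ _)
    calc τ * C' < (1 / C') * C' := by nlinarith
      _ = 1 := by field_simp
  set r : ℝ := 1 + τ / 2 * A with hrdef
  have hAC' : -C' ≤ A := by
    have := abs_le.mp hC'A
    linarith [this.1]
  have hprod : 0 ≤ τ * (A + C') := mul_nonneg hτ0.le (by linarith)
  have hr0 : 0 < r := by rw [hrdef]; nlinarith
  have hneg : τ * A < 0 := mul_neg_of_pos_of_neg hτ0 hA0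
  have hr1 : r < 1 := by rw [hrdef]; linarith
  have key : ∀ k, ‖x k - y‖ ≤ ‖x 0 - y‖ * r ^ k := by
    intro k
    induction k with
    | zero => simp
    | succ k ih =>
      have hrk : r ^ k ≤ 1 := pow_le_one₀ hr0.le hr1.le
      have hs : ‖x k - y‖ < δ := by
        calc ‖x k - y‖ ≤ ‖x 0 - y‖ * r ^ k := ih
          _ ≤ ‖x 0 - y‖ * 1 := by nlinarith [norm_nonneg (x 0 - y)]
          _ < τ := by simpa using hx0
          _ < δ := hτδ
      have hFts : Ft ‖x k - y‖ < A / 2 := by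
        apply hδ
        simpa [Real.dist_eq, abs_of_nonneg (norm_nonneg (x k - y))] using hs
      have hFtlb : -C' ≤ Ft ‖x k - y‖ := by
        have h := abs_le.mp ((hC (‖x k - y‖)).trans hC'C)
        linarith [h.1]
      have hxk : x (k + 1) - y = (1 + τ * Ft ‖x k - y‖) • (x k - y) := by
        rw [hrec k]; abel
      have h1 : τ * -C' ≤ τ * Ft ‖x k - y‖ := mul_le_mul_of_nonneg_left hFtlb hτ0.le
      have hcnn : 0 ≤ 1 + τ * Ft ‖x k - y‖ := by nlinarith
      have h2 : τ * Ft ‖x k - y‖ ≤ τ * (A / 2) := mul_le_mul_of_nonneg_left hFts.le hτ0.le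
      have hcr : 1 + τ * Ft ‖x k - y‖ ≤ r := by rw [hrdef]; linarith
      have hnorm : ‖x (k + 1) - y‖ ≤ r * ‖x k - y‖ := by
        rw [hxk, norm_smul, Real.norm_eq_abs, abs_of_nonneg hcnn]
        exact mul_le_mul_of_nonneg_right hcr (norm_nonneg _)
      calc ‖x (k + 1) - y‖ ≤ r * ‖x k - y‖ := hnorm
        _ ≤ r * (‖x 0 - y‖ * r ^ k) := mul_le_mul_of_nonneg_left ih hr0.le
        _ = ‖x 0 - y‖ * r ^ (k + 1) := by ring
  refine ⟨key, ?_⟩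
  rw [tendsto_iff_norm_sub_tendsto_zero]
  apply squeeze_zero (fun k => norm_nonneg _) key
  have : Tendsto (fun k : ℕ => r ^ k) atTop (nhds 0) :=
    tendsto_pow_atTop_nhds_zero_of_lt_one hr0.le hr1
  simpa using this.const_mul ‖x 0 - y‖
end
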